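/- For every finite group G and prime p, the hypercenter of the 𝒰_p-residual of G is contained in the terminal term of the upper 𝒰_p-norm series: Z_∞(G^{𝒰_p}) ≤ N^∞_{𝒰_p}(G). -/

import Mathlib

universe u

/-- A class of groups (a property of groups) in universe `u`. -/
abbrev GroupClass : Type (u + 1) := ∀ (H : Type u) [Group H], Prop

/-- A (finite) normal chain of `G`: a monotone chain of subgroups running from `⊥`
to `⊤`, all of whose terms are normal in `G`. -/
structure NormalChain (G : Type u) [Group G] : Type u where
  len : ℕ
  ser : Fin (len + 1) → Subgroup G
  mono : Monotone ser
  bot_eq : ser 0 = ⊥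
  top_eq : ser (Fin.last len) = ⊤
  normal : ∀ i, (ser i).Normal

namespace NormalChain

variable {G : Type u} [Group G] (S : NormalChain G)

/-- The order of the `i`-th factor `S.ser i.succ / S.ser i.castSucc` of the chain. -/
noncomputable def factorCard (i : Fin S.len) : ℕ :=
  (S.ser i.castSucc).relIndex (S.ser i.succ)

/-- The `i`-th factor of the chain (realized as the image of `S.ser i.succ` in
`G ⧸ S.ser i.castSucc`) satisfies the group property `P`. -/
def FactorProp (P : GroupClass.{u}) (i : Fin S.len) : Prop :=
  letI := S.normal i.castSucc
  P ↥(Subgroup.map (QuotientGroup.mk' (S.ser i.castSucc)) (S.ser i.succ))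

end NormalChain

/-- A finite group is `p`-nilpotent if it has a normal `p`-complement. -/
def IsPNilpotentGrp (p : ℕ) (G : Type u) [Group G] : Prop :=
  ∃ N : Subgroup G, N.Normal ∧ ¬ p ∣ Nat.card N ∧ ∃ k : ℕ, N.index = p ^ k

/-- A group is supersolvable if it has a normal series with cyclic factors. -/
def IsSupersolvableGrp (G : Type u) [Group G] : Prop :=
  ∃ S : NormalChain G, ∀ i, S.FactorProp (fun H inst => letI := inst; IsCyclic H) i

/-- A group is `p`-solvable if it has a normal series each of whose factors is a
`p`-group or a `p'`-group. -/
def IsPSolvableGrp (p : ℕ) (G : Type u) [Group G] : Prop :=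
  ∃ S : NormalChain G, ∀ i, (∃ k : ℕ, S.factorCard i = p ^ k) ∨ ¬ p ∣ S.factorCard i

/-- `N < M` is a chief factor of `G`: both are normal in `G` and no normal subgroup of
`G` lies strictly between them. -/
def IsChiefFactorOf (G : Type u) [Group G] (N M : Subgroup G) : Prop :=
  N.Normal ∧ M.Normal ∧ N < M ∧
    ∀ K : Subgroup G, K.Normal → N ≤ K → K ≤ M → K = N ∨ K = M

/-- A group is `p`-supersolvable if it is `p`-solvable and all its chief factors of
order divisible by `p` are (cyclic) of order `p`. -/
def IsPSupersolvableGrp (p : ℕ) (G : Type u) [Group G] : Prop :=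
  IsPSolvableGrp p G ∧
    ∀ N M : Subgroup G, IsChiefFactorOf G N M →
      p ∣ N.relIndex M → N.relIndex M = p

/-- The formation of supersolvable groups, as a class of groups. -/
def supersolvableClass : GroupClass.{u} := fun H inst => @IsSupersolvableGrp H inst

/-- The formation of `p`-supersolvable groups, as a class of groups. -/
def pSupersolvableClass (p : ℕ) : GroupClass.{u} := fun H inst => @IsPSupersolvableGrp p H inst

/-- `N` is normal in `G` with `G ⧸ N` in the class `C`. -/
def QuotientInClass (C : GroupClass.{u}) {G : Type u} [Group G] (N : Subgroup G) : Prop :=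
  ∃ _h : N.Normal, letI := _h; C (G ⧸ N)

/-- The `C`-residual `G^C` of `G`: the intersection of all normal subgroups of `G`
whose quotient lies in `C`. -/
def groupResidual (C : GroupClass.{u}) (G : Type u) [Group G] : Subgroup G :=
  sInf {N : Subgroup G | QuotientInClass C N}

/-- The `C`-residual `T^C` of a subgroup `T` of `G`, viewed as a subgroup of `G`. -/
def residualIn (C : GroupClass.{u}) {G : Type u} [Group G] (T : Subgroup G) : Subgroup G :=
  Subgroup.map T.subtype (groupResidual C ↥T)

/-- The weak norm `N_C(G, H) = ⋂_{T ≤ H} N_G(T^C)` of `H` in `G` with respect to `C`. -/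
def weakNorm (C : GroupClass.{u}) {G : Type u} [Group G] (H : Subgroup G) : Subgroup G :=
  ⨅ (T : Subgroup G) (_ : T ≤ H), Subgroup.normalizer (residualIn C T : Set G)

/-- The norm `N_C(G) = N_C(G, G)` of `G` with respect to `C`. -/
def grpNorm (C : GroupClass.{u}) (G : Type u) [Group G] : Subgroup G :=
  weakNorm C (⊤ : Subgroup G)

/-- `s` is the upper `C`-norm series of `G`: `s 0 = ⊥` and
`s (i+1) / s i = N_C(G / s i)`. -/
def IsUpperNormSeries (C : GroupClass.{u}) (G : Type u) [Group G]
    (s : ℕ → Subgroup G) : Prop :=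
  s 0 = ⊥ ∧ ∀ i : ℕ, ∃ h : (s i).Normal,
    s (i + 1) =
      (letI := h; Subgroup.comap (QuotientGroup.mk' (s i)) (grpNorm C (G ⧸ s i)))

/-- The hypercenter of a group: the terminal term of the upper central series. -/
def hyperCenter (G : Type u) [Group G] : Subgroup G :=
  ⨆ n : ℕ, Subgroup.upperCentralSeries G n

/-- The `p`-Fitting length of `G`: the length of a shortest normal chain of `G`
all of whose factors are `p`-nilpotent. -/
noncomputable def pFittingLength (p : ℕ) (G : Type u) [Group G] : ℕ :=
  sInf {n : ℕ | ∃ S : NormalChain G, S.len = n ∧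
    ∀ i, S.FactorProp (fun H inst => @IsPNilpotentGrp p H inst) i}

/-- The Fitting length of `G`: the length of a shortest normal chain of `G`
all of whose factors are nilpotent. -/
noncomputable def fittingLength (G : Type u) [Group G] : ℕ :=
  sInf {n : ℕ | ∃ S : NormalChain G, S.len = n ∧
    ∀ i, S.FactorProp (fun H inst => @Group.IsNilpotent H inst) i}

/-- The `p`-length of `G`: the least number of `p`-factors in a normal chain of `G`
each of whose factors is a `p`-group or a `p'`-group. -/
noncomputable def pLength (p : ℕ) (G : Type u) [Group G] : ℕ :=
  sInf {n : ℕ | ∃ S : NormalChain G,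
    (∀ i, (∃ k : ℕ, S.factorCard i = p ^ k) ∨ ¬ p ∣ S.factorCard i) ∧
    Nat.card {i : Fin S.len // p ∣ S.factorCard i} ≤ n}

namespace AuxPS
variable {G : Type*} [Group G]

/-- factor condition: order `p` or prime to `p`. -/
def cond (p m : ℕ) : Prop := m = p ∨ ¬ p ∣ m

lemma cond_of_dvd {p : ℕ} (hp : p.Prime) {d m : ℕ} (h : d ∣ m) (hm : cond p m) : cond p d := by
  rcases hm with h1 | h1
  · subst h1
    rcases (Nat.dvd_prime hp).mp h with h2 | h2
    · right
      rw [h2]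
      intro hpd
      exact hp.one_lt.ne' (Nat.dvd_one.mp hpd)
    · left; exact h2
  · right; exact fun hd => h1 (hd.trans h)

lemma relindex_eq_card_map (A B : Subgroup G) [A.Normal] :
    A.relIndex B = Nat.card (B.map (QuotientGroup.mk' A)) := by
  conv_lhs => rw [← QuotientGroup.ker_mk' A]
  rw [Subgroup.relIndex_ker]

/-- For `A` normal, `relindex A` is monotone w.r.t. divisibility. -/
lemma relindex_dvd_of_le_right {A X B : Subgroup G} [A.Normal] (h : X ≤ B) :
    A.relIndex X ∣ A.relIndex B := by
  rw [relindex_eq_card_map, relindex_eq_card_map]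
  exact Subgroup.card_dvd_of_le (Subgroup.map_mono h)

lemma comap_relindex {H : Type*} [Group H] (f : G →* H) (hf : Function.Surjective f)
    (A B : Subgroup H) : (A.comap f).relIndex (B.comap f) = A.relIndex B := by
  rw [Subgroup.relIndex_comap, Subgroup.map_comap_eq_self_of_surjective hf]

lemma card_map_dvd {H : Type*} [Group H] (f : G →* H) (X : Subgroup G) :
    Nat.card (X.map f) ∣ Nat.card X :=
  Subgroup.card_dvd_of_surjective (f.subgroupMap X) (f.subgroupMap_surjective X)

lemma map_relindex_dvd {H : Type*} [Group H] (f : G →* H) (hf : Function.Surjective f)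
    {A : Subgroup G} (hA : A.Normal) (B : Subgroup G) :
    (A.map f).relIndex (B.map f) ∣ A.relIndex B := by
  haveI := hA
  haveI : (A.map f).Normal := hA.map f hf
  rw [relindex_eq_card_map, relindex_eq_card_map]
  have key : (B.map f).map (QuotientGroup.mk' (A.map f)) =
      (B.map (QuotientGroup.mk' A)).map (QuotientGroup.map A (A.map f) f (Subgroup.le_comap_map f A)) := by
    rw [Subgroup.map_map, Subgroup.map_map]
    congr 1
  rw [key]
  exact card_map_dvd _ _

lemma subgroupOf_relindex_dvd {A B : Subgroup G} [A.Normal] (T : Subgroup G) :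
    (A.subgroupOf T).relIndex (B.subgroupOf T) ∣ A.relIndex B := by
  have h1 : (A.subgroupOf T).relIndex (B.subgroupOf T) = A.relIndex (B ⊓ T) := by
    rw [show B.subgroupOf T = (B ⊓ T).subgroupOf T from (Subgroup.inf_subgroupOf_right B T).symm]
    exact Subgroup.relIndex_subgroupOf inf_le_right
  rw [h1]
  exact relindex_dvd_of_le_right inf_le_left

lemma card_range_dvd_of_ker_le {X Y Z : Type*} [Group X] [Group Y] [Group Z]
    (f1 : X →* Y) (f2 : X →* Z) (hker : f1.ker ≤ f2.ker) :
    Nat.card f2.range ∣ Nat.card f1.range := by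
  rw [← Nat.card_congr (QuotientGroup.quotientKerEquivRange f2).toEquiv,
      ← Nat.card_congr (QuotientGroup.quotientKerEquivRange f1).toEquiv]
  refine Subgroup.card_dvd_of_surjective
    (QuotientGroup.map f1.ker f2.ker (MonoidHom.id X) (by simpa using hker)) ?_
  intro y
  refine QuotientGroup.induction_on y (fun x => ⟨QuotientGroup.mk x, ?_⟩)
  simp [QuotientGroup.map_mk]

lemma sandwich_relindex_dvd {A B N M : Subgroup G} [A.Normal] [N.Normal]
    (hAB : A ≤ B) (h1 : N ⊔ (B ⊓ M) = M) (h2 : A ⊓ M ≤ N) :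
    N.relIndex M ∣ A.relIndex B := by
  rw [relindex_eq_card_map, relindex_eq_card_map]
  have hMmap : M.map (QuotientGroup.mk' N) = (B ⊓ M).map (QuotientGroup.mk' N) := by
    conv_lhs => rw [← h1]
    rw [Subgroup.map_sup, QuotientGroup.map_mk'_self, bot_sup_eq]
  rw [hMmap]
  have e1 : (B ⊓ M).map (QuotientGroup.mk' N) =
      ((QuotientGroup.mk' N).comp (B ⊓ M).subtype).range := by
    rw [MonoidHom.range_comp, Subgroup.range_subtype]
  have e2 : (B ⊓ M).map (QuotientGroup.mk' A) =
      ((QuotientGroup.mk' A).comp (B ⊓ M).subtype).range := by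
    rw [MonoidHom.range_comp, Subgroup.range_subtype]
  have key : Nat.card ((B ⊓ M).map (QuotientGroup.mk' N)) ∣
      Nat.card ((B ⊓ M).map (QuotientGroup.mk' A)) := by
    rw [e1, e2]
    refine card_range_dvd_of_ker_le _ _ ?_
    intro x hx
    simp only [MonoidHom.mem_ker, MonoidHom.comp_apply, Subgroup.coe_subtype,
      QuotientGroup.mk'_apply, QuotientGroup.eq_one_iff] at hx ⊢
    exact h2 ⟨hx, x.2.2⟩
  exact key.trans (Subgroup.card_dvd_of_le (Subgroup.map_mono inf_le_left))

/-- `p`-solvability condition on a factor order. -/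
def solvCond (p m : ℕ) : Prop := (∃ k : ℕ, m = p ^ k) ∨ ¬ p ∣ m

lemma solvCond_of_dvd {p : ℕ} (hp : p.Prime) {d m : ℕ} (h : d ∣ m) (hm : solvCond p m) :
    solvCond p d := by
  rcases hm with ⟨k, rfl⟩ | h1
  · obtain ⟨j, _, rfl⟩ := (Nat.dvd_prime_pow hp).mp h
    exact Or.inl ⟨j, rfl⟩
  · exact Or.inr fun hd => h1 (hd.trans h)

lemma cond_imp_solvCond {p m : ℕ} (h : cond p m) : solvCond p m := by
  rcases h with h | h
  · exact Or.inl ⟨1, by rw [h, pow_one]⟩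
  · exact Or.inr h

/-- A normal chain from `A` to `B` (all terms normal in the ambient group) whose
factor orders satisfy `Q`. -/
def genChain (Q : ℕ → Prop) {G : Type*} [Group G] (A B : Subgroup G) : Prop :=
  ∃ (n : ℕ) (c : ℕ → Subgroup G), c 0 = A ∧ c n = B ∧ (∀ i, c i ≤ c (i + 1)) ∧
    (∀ i, (c i).Normal) ∧ ∀ i, i < n → Q ((c i).relIndex (c (i + 1)))

lemma genChain.trans {Q : ℕ → Prop} {A B C : Subgroup G} (h1 : genChain Q A B)
    (h2 : genChain Q B C) : genChain Q A C := by
  obtain ⟨n, c, hc0, hcn, hmono, hnorm, hcond⟩ := h1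
  obtain ⟨m, d, hd0, hdm, hdmono, hdnorm, hdcond⟩ := h2
  refine ⟨n + m, fun i => if i ≤ n then c i else d (i - n), by simp [hc0], ?_, ?_, ?_, ?_⟩
  · by_cases hm : m = 0
    · subst hm
      simpa using hcn.trans (hd0.symm.trans hdm)
    · have h0 : ¬ (n + m ≤ n) := by omega
      simp only [h0, if_neg, if_false]
      rw [show n + m - n = m by omega, hdm]
  · intro i
    by_cases h : i + 1 ≤ n
    · simp only [show i ≤ n by omega, if_pos, h, if_true]
      simpa [show i ≤ n by omega] using hmono i
    · by_cases h' : i ≤ n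
      · have hin : i = n := by omega
        subst hin
        simp only [le_refl, if_true, if_neg h]
        rw [show i + 1 - i = 1 by omega, hcn, ← hd0]
        exact hdmono 0
      · simp only [if_neg h', if_neg h]
        rw [show i + 1 - n = (i - n) + 1 by omega]
        exact hdmono (i - n)
  · intro i
    by_cases h : i ≤ n
    · simpa [h] using hnorm i
    · simpa [h] using hdnorm (i - n)
  · intro i hi
    by_cases h : i + 1 ≤ n
    · simp only [show i ≤ n by omega, if_true, h, if_true]
      exact hcond i (by omega)
    · by_cases h' : i ≤ n
      · have hin : i = n := by omega
        subst hin
        simp only [le_refl, if_true, if_neg h]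
        rw [show i + 1 - i = 1 by omega, hcn, ← hd0]
        exact hdcond 0 (by omega)
      · simp only [if_neg h', if_neg h]
        rw [show i + 1 - n = (i - n) + 1 by omega]
        exact hdcond (i - n) (by omega)

lemma genChain.comap {Q : ℕ → Prop} {H : Type*} [Group H] (f : G →* H)
    (hf : Function.Surjective f) {A B : Subgroup H} (h : genChain Q A B) :
    genChain Q (A.comap f) (B.comap f) := by
  obtain ⟨n, c, hc0, hcn, hmono, hnorm, hcond⟩ := h
  refine ⟨n, fun i => (c i).comap f, by simp only [hc0], by simp only [hcn],
    fun i => Subgroup.comap_mono (hmono i), fun i => (hnorm i).comap f, fun i hi => ?_⟩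
  rw [comap_relindex f hf]
  exact hcond i hi

lemma genChain.map {Q : ℕ → Prop} (hQ : ∀ {d m : ℕ}, d ∣ m → Q m → Q d) {H : Type*} [Group H]
    (f : G →* H) (hf : Function.Surjective f) {A B : Subgroup G} (h : genChain Q A B) :
    genChain Q (A.map f) (B.map f) := by
  obtain ⟨n, c, hc0, hcn, hmono, hnorm, hcond⟩ := h
  refine ⟨n, fun i => (c i).map f, by simp only [hc0], by simp only [hcn],
    fun i => Subgroup.map_mono (hmono i), fun i => (hnorm i).map f hf, fun i hi => ?_⟩
  exact hQ (map_relindex_dvd f hf (hnorm i) _) (hcond i hi)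

lemma genChain.subgroupOf {Q : ℕ → Prop} (hQ : ∀ {d m : ℕ}, d ∣ m → Q m → Q d) (T : Subgroup G)
    {A B : Subgroup G} (h : genChain Q A B) :
    genChain Q (A.subgroupOf T) (B.subgroupOf T) := by
  obtain ⟨n, c, hc0, hcn, hmono, hnorm, hcond⟩ := h
  refine ⟨n, fun i => (c i).subgroupOf T, by simp only [hc0], by simp only [hcn],
    fun i => Subgroup.comap_mono (hmono i), fun i => (hnorm i).subgroupOf T, fun i hi => ?_⟩
  haveI := hnorm i
  exact hQ (subgroupOf_relindex_dvd T) (hcond i hi)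

lemma inf_relindex_dvd {A B : Subgroup G} [A.Normal] (hAB : A ≤ B) (N : Subgroup G) :
    (N ⊓ A).relIndex (N ⊓ B) ∣ A.relIndex B := by
  have e1 : (N ⊓ A).relIndex (N ⊓ B) = ((N ⊓ A) ⊓ (N ⊓ B)).relIndex (N ⊓ B) :=
    (Subgroup.inf_relIndex_right _ _).symm
  have e2 : (N ⊓ A) ⊓ (N ⊓ B) = A ⊓ (N ⊓ B) := by
    ext x
    simp only [Subgroup.mem_inf]
    refine ⟨fun h => ⟨h.1.2, h.2⟩, fun h => ⟨⟨h.2.1, h.1⟩, h.2⟩⟩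
  rw [e1, e2, Subgroup.inf_relIndex_right]
  exact relindex_dvd_of_le_right inf_le_right

lemma genChain.inf_left {Q : ℕ → Prop} (hQ : ∀ {d m : ℕ}, d ∣ m → Q m → Q d) (N : Subgroup G)
    (hN : N.Normal) {A B : Subgroup G} (h : genChain Q A B) :
    genChain Q (N ⊓ A) (N ⊓ B) := by
  obtain ⟨n, c, hc0, hcn, hmono, hnorm, hcond⟩ := h
  refine ⟨n, fun i => N ⊓ c i, by simp only [hc0], by simp only [hcn],
    fun i => inf_le_inf_left N (hmono i), fun i => ?_, fun i hi => ?_⟩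
  · haveI := hnorm i; haveI := hN; exact Subgroup.normal_inf_normal N (c i)
  · haveI := hnorm i
    exact hQ (inf_relindex_dvd (hmono i) N) (hcond i hi)

lemma genChain_iff_normalChain {Q : ℕ → Prop} {G : Type u} [Group G] :
    genChain Q (⊥ : Subgroup G) ⊤ ↔
      ∃ S : NormalChain G, ∀ i : Fin S.len, Q (S.factorCard i) := by
  constructor
  · rintro ⟨n, c, hc0, hcn, hmono, hnorm, hcond⟩
    have hmono' : Monotone c := monotone_nat_of_le_succ hmono
    refine ⟨⟨n, fun i => c i.val, fun i j hij => hmono' hij, by simpa using hc0,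
      by simpa using hcn, fun i => hnorm i.val⟩, fun i => ?_⟩
    have : NormalChain.factorCard _ i = (c i.val).relIndex (c (i.val + 1)) := by
      simp [NormalChain.factorCard]
    rw [this]
    exact hcond i.val i.isLt
  · rintro ⟨S, hS⟩
    refine ⟨S.len, fun i => S.ser ⟨min i S.len, by omega⟩, ?_, ?_, ?_, ?_, ?_⟩
    · show S.ser ⟨min 0 S.len, by omega⟩ = ⊥
      have h0 : (⟨min 0 S.len, by omega⟩ : Fin (S.len + 1)) = 0 := by
        ext; simp
      rw [h0, S.bot_eq]
    · show S.ser ⟨min S.len S.len, by omega⟩ = ⊤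
      have h1 : (⟨min S.len S.len, by omega⟩ : Fin (S.len + 1)) = Fin.last S.len := by
        ext; simp
      rw [h1, S.top_eq]
    · intro i
      exact S.mono (by simp only [Fin.mk_le_mk]; omega)
    · intro i
      exact S.normal _
    · intro i hi
      have e1 : (⟨min i S.len, by omega⟩ : Fin (S.len + 1)) = (⟨i, hi⟩ : Fin S.len).castSucc := by
        ext; simp [Fin.castSucc]; omega
      have e2 : (⟨min (i + 1) S.len, by omega⟩ : Fin (S.len + 1)) = (⟨i, hi⟩ : Fin S.len).succ := by
        ext; simp [Fin.succ]; omega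
      show Q ((S.ser ⟨min i S.len, by omega⟩).relIndex (S.ser ⟨min (i + 1) S.len, by omega⟩))
      rw [e1, e2]
      exact hS ⟨i, hi⟩

lemma isPSolvableGrp_iff_genChain {p : ℕ} {G : Type u} [Group G] :
    IsPSolvableGrp p G ↔ genChain (solvCond p) (⊥ : Subgroup G) ⊤ := by
  rw [genChain_iff_normalChain]
  rfl

/-- jump lemma -/
lemma exists_jump {N M : Subgroup G} (hne : N ≠ M) {n : ℕ} (D : ℕ → Subgroup G)
    (hD : ∀ i, D i = N ∨ D i = M) (h0 : D 0 = N) (hn : D n = M) :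
    ∃ i, i < n ∧ D i = N ∧ D (i + 1) = M := by
  induction n with
  | zero => exact absurd (h0.symm.trans hn) hne
  | succ n ih =>
    rcases hD n with h | h
    · exact ⟨n, Nat.lt_succ_self n, h, hn⟩
    · obtain ⟨i, hi, h1, h2⟩ := ih h
      exact ⟨i, hi.trans (Nat.lt_succ_self n), h1, h2⟩

/-- Over a group with a `p`-or-`p'` chain, every chief factor has order `p` or `p'`. -/
lemma chief_cond_of_chain {p : ℕ} (hp : p.Prime) (h : genChain (cond p) (⊥ : Subgroup G) ⊤)
    {N M : Subgroup G} (hch : IsChiefFactorOf G N M) : cond p (N.relIndex M) := by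
  obtain ⟨hN, hM, hlt, hchief⟩ := hch
  obtain ⟨n, c, hc0, hcn, hmono, hnorm, hcond⟩ := h
  haveI := hN
  haveI := hM
  set D : ℕ → Subgroup G := fun i => N ⊔ (c i ⊓ M) with hD
  have hDnm : ∀ i, D i = N ∨ D i = M := by
    intro i
    haveI := hnorm i
    refine hchief (D i) (Subgroup.sup_normal N (c i ⊓ M)) le_sup_left ?_
    exact sup_le hlt.le inf_le_right
  have hD0 : D 0 = N := by simp [hD, hc0]
  have hDn : D n = M := by
    simp only [hD, hcn, top_inf_eq]
    exact sup_eq_right.mpr hlt.le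
  obtain ⟨i, hi, h1, h2⟩ := exists_jump hlt.ne D hDnm hD0 hDn
  haveI := hnorm i
  have hdvd : N.relIndex M ∣ (c i).relIndex (c (i + 1)) := by
    refine sandwich_relindex_dvd (hmono i) h2 ?_
    calc c i ⊓ M ≤ N ⊔ (c i ⊓ M) := le_sup_right
    _ = N := h1
  exact cond_of_dvd hp hdvd (hcond i hi)

/-- A chain with `p`-or-`p'` factors yields `p`-supersolvability. -/
lemma isPSupersolvable_of_chain {p : ℕ} (hp : p.Prime) {G : Type u} [Group G]
    (h : genChain (cond p) (⊥ : Subgroup G) ⊤) : IsPSupersolvableGrp p G := by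
  constructor
  · rw [isPSolvableGrp_iff_genChain]
    obtain ⟨n, c, h1, h2, h3, h4, h5⟩ := h
    exact ⟨n, c, h1, h2, h3, h4, fun i hi => cond_imp_solvCond (h5 i hi)⟩
  · intro N M hch hdvd
    rcases chief_cond_of_chain hp h hch with h | h
    · exact h
    · exact absurd hdvd h

lemma genChain.single {Q : ℕ → Prop} {A B : Subgroup G} (hA : A.Normal) (hB : B.Normal)
    (hle : A ≤ B) (hQ : Q (A.relIndex B)) : genChain Q A B := by
  refine ⟨1, fun i => if i = 0 then A else B, by simp, by simp, ?_, ?_, ?_⟩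
  · intro i
    by_cases h : i = 0 <;> simp [h, hle]
  · intro i
    by_cases h : i = 0 <;> simp [h, hA, hB]
  · intro i hi
    have : i = 0 := by omega
    subst this
    simpa using hQ

lemma genChain.cons {Q : ℕ → Prop} {G : Type u} [Group G] {A : Subgroup G} (hA : A.Normal)
    (hQA : Q ((⊥ : Subgroup G).relIndex A))
    (h : letI := hA; genChain Q (⊥ : Subgroup (G ⧸ A)) ⊤) :
    genChain Q (⊥ : Subgroup G) ⊤ := by
  letI := hA
  have h2 := h.comap (QuotientGroup.mk' A) (QuotientGroup.mk'_surjective A)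
  rw [MonoidHom.comap_bot, QuotientGroup.ker_mk', Subgroup.comap_top] at h2
  exact (genChain.single inferInstance hA bot_le hQA).trans h2

lemma exists_minimal_wrt' {α : Type*} [PartialOrder α] {s : Set α} (h : s.Finite)
    (hs : s.Nonempty) : ∃ a ∈ s, ∀ a' ∈ s, id a' ≤ id a → id a = id a' := by
  obtain ⟨a, ha, hm⟩ := Set.Finite.exists_minimalFor id s h hs
  exact ⟨a, ha, fun a' ha' hle => le_antisymm (hm ha' hle) hle⟩

lemma exists_minimal_normal {G : Type u} [Group G] [Finite G] (h : (⊥ : Subgroup G) ≠ ⊤) :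
    ∃ A : Subgroup G, A.Normal ∧ A ≠ ⊥ ∧
      ∀ K : Subgroup G, K.Normal → K ≠ ⊥ → K ≤ A → K = A := by
  have hfin : ({A : Subgroup G | A.Normal ∧ A ≠ ⊥}).Finite := Set.toFinite _
  have hne : ({A : Subgroup G | A.Normal ∧ A ≠ ⊥}).Nonempty :=
    ⟨⊤, ⟨inferInstance, fun hbot => h hbot.symm⟩⟩
  obtain ⟨A, hA, hmin⟩ := exists_minimal_wrt' hfin hne
  exact ⟨A, hA.1, hA.2, fun K hK hKbot hKA => (hmin K ⟨hK, hKbot⟩ hKA).symm⟩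

lemma chiefFactor_bot_of_minimal {G : Type u} [Group G] {A : Subgroup G} (hA : A.Normal)
    (hAbot : A ≠ ⊥) (hmin : ∀ K : Subgroup G, K.Normal → K ≠ ⊥ → K ≤ A → K = A) :
    IsChiefFactorOf G ⊥ A := by
  refine ⟨inferInstance, hA, bot_lt_iff_ne_bot.mpr hAbot, ?_⟩
  intro K hK _ hKA
  by_cases h : K = ⊥
  · exact Or.inl h
  · exact Or.inr (hmin K hK h hKA)

lemma isPSupersolvable_of_surjective {p : ℕ} (hp : p.Prime) {G : Type u} {H : Type u} [Group G]
    [Group H] (f : G →* H) (hf : Function.Surjective f) (h : IsPSupersolvableGrp p G) :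
    IsPSupersolvableGrp p H := by
  obtain ⟨hsolv, hchief⟩ := h
  constructor
  · rw [isPSolvableGrp_iff_genChain] at hsolv ⊢
    have := hsolv.map (fun {d m} => solvCond_of_dvd hp) f hf
    rwa [Subgroup.map_bot, Subgroup.map_top_of_surjective f hf] at this
  · intro N M hch hdvd
    obtain ⟨hN, hM, hlt, hcf⟩ := hch
    have hcomap : IsChiefFactorOf G (N.comap f) (M.comap f) := by
      refine ⟨hN.comap f, hM.comap f, ?_, ?_⟩
      · refine lt_of_le_of_ne (Subgroup.comap_mono hlt.le) (fun hEq => hlt.ne ?_)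
        rw [← Subgroup.map_comap_eq_self_of_surjective hf N,
          ← Subgroup.map_comap_eq_self_of_surjective hf M, hEq]
      · intro K hK hNK hKM
        have hkerK : f.ker ≤ K := le_trans (by
          rw [← MonoidHom.comap_bot]
          exact Subgroup.comap_mono bot_le) hNK
        have hmapK : (K.map f).Normal := hK.map f hf
        have h1 : N ≤ K.map f := by
          rw [← Subgroup.map_comap_eq_self_of_surjective hf N]
          exact Subgroup.map_mono hNK
        have h2 : K.map f ≤ M := by
          rw [← Subgroup.map_comap_eq_self_of_surjective hf M]
          exact Subgroup.map_mono hKM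
        rcases hcf (K.map f) hmapK h1 h2 with h | h
        · left; rw [← Subgroup.comap_map_eq_self hkerK, h]
        · right; rw [← Subgroup.comap_map_eq_self hkerK, h]
    have heq : (N.comap f).relIndex (M.comap f) = N.relIndex M := comap_relindex f hf N M
    rw [← heq] at hdvd ⊢
    exact hchief _ _ hcomap hdvd

lemma chain_of_isPSupersolvable {p : ℕ} (hp : p.Prime) (n : ℕ) :
    ∀ (G : Type u) (_ : Group G) (_ : Finite G), Nat.card G = n →
      IsPSupersolvableGrp p G → genChain (cond p) (⊥ : Subgroup G) ⊤ := by
  induction n using Nat.strong_induction_on with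
  | _ n ih =>
    intro G _ _ hcard hG
    by_cases htriv : (⊥ : Subgroup G) = ⊤
    · exact ⟨0, fun _ => ⊥, rfl, htriv, fun i => le_rfl, fun i => inferInstance,
        fun i hi => absurd hi (by omega)⟩
    · obtain ⟨A, hA, hAbot, hmin⟩ := exists_minimal_normal htriv
      haveI := hA
      have hchA : IsChiefFactorOf G ⊥ A := chiefFactor_bot_of_minimal hA hAbot hmin
      have hcondA : cond p ((⊥ : Subgroup G).relIndex A) := by
        by_cases hdvd : p ∣ (⊥ : Subgroup G).relIndex A
        · exact Or.inl (hG.2 ⊥ A hchA hdvd)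
        · exact Or.inr hdvd
      have hq : IsPSupersolvableGrp p (G ⧸ A) :=
        isPSupersolvable_of_surjective hp (QuotientGroup.mk' A) (QuotientGroup.mk'_surjective A) hG
      have hlt : Nat.card (G ⧸ A) < n := by
        have hmul : Nat.card G = Nat.card (G ⧸ A) * Nat.card A :=
          Subgroup.card_eq_card_quotient_mul_card_subgroup A
        have h1 : 1 < Nat.card A := (Subgroup.one_lt_card_iff_ne_bot A).mpr hAbot
        have h2 : 0 < Nat.card (G ⧸ A) := Nat.card_pos
        have h3 : Nat.card (G ⧸ A) < Nat.card (G ⧸ A) * Nat.card A :=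
          (Nat.lt_mul_iff_one_lt_right h2).mpr h1
        omega
      exact genChain.cons hA hcondA (ih _ hlt (G ⧸ A) _ (by infer_instance) rfl hq)

lemma isPSupersolvable_iff_chain {p : ℕ} (hp : p.Prime) {G : Type u} [Group G] [Finite G] :
    IsPSupersolvableGrp p G ↔ genChain (cond p) (⊥ : Subgroup G) ⊤ :=
  ⟨fun h => chain_of_isPSupersolvable hp (Nat.card G) G ‹Group G› ‹Finite G› rfl h,
   fun h => isPSupersolvable_of_chain hp h⟩

lemma isPSupersolvable_of_subsingleton {p : ℕ} (hp : p.Prime) {G : Type u} [Group G]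
    [Subsingleton G] : IsPSupersolvableGrp p G :=
  isPSupersolvable_of_chain hp ⟨0, fun _ => ⊥, rfl, Subsingleton.elim _ _,
    fun _ => le_rfl, fun _ => inferInstance, fun i hi => absurd hi (by omega)⟩

lemma quotientInClass_top {p : ℕ} (hp : p.Prime) {G : Type u} [Group G] :
    QuotientInClass (pSupersolvableClass p) (⊤ : Subgroup G) := by
  refine ⟨inferInstance, ?_⟩
  haveI : Subsingleton (G ⧸ (⊤ : Subgroup G)) := QuotientGroup.subsingleton_quotient_top
  exact isPSupersolvable_of_subsingleton hp

lemma quotientInClass_inf {p : ℕ} (hp : p.Prime) {G : Type u} [Group G] [Finite G]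
    {N1 N2 : Subgroup G} (h1 : QuotientInClass (pSupersolvableClass p) N1)
    (h2 : QuotientInClass (pSupersolvableClass p) N2) :
    QuotientInClass (pSupersolvableClass p) (N1 ⊓ N2) := by
  obtain ⟨hn1, hq1⟩ := h1
  obtain ⟨hn2, hq2⟩ := h2
  haveI := hn1; haveI := hn2
  haveI : (N1 ⊓ N2).Normal := Subgroup.normal_inf_normal N1 N2
  refine ⟨inferInstance, ?_⟩
  rw [pSupersolvableClass] at hq1 hq2 ⊢
  rw [isPSupersolvable_iff_chain hp] at hq1 hq2 ⊢
  have c1 : genChain (cond p) N1 ⊤ := by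
    have := hq1.comap (QuotientGroup.mk' N1) (QuotientGroup.mk'_surjective N1)
    rwa [MonoidHom.comap_bot, QuotientGroup.ker_mk', Subgroup.comap_top] at this
  have c2 : genChain (cond p) N2 ⊤ := by
    have := hq2.comap (QuotientGroup.mk' N2) (QuotientGroup.mk'_surjective N2)
    rwa [MonoidHom.comap_bot, QuotientGroup.ker_mk', Subgroup.comap_top] at this
  have c2' : genChain (cond p) (N1 ⊓ N2) N1 := by
    have := c2.inf_left (fun {d m} => cond_of_dvd hp) N1 hn1
    rwa [inf_top_eq] at this
  have c3 : genChain (cond p) (N1 ⊓ N2) ⊤ := c2'.trans c1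
  have c4 := c3.map (fun {d m} => cond_of_dvd hp) (QuotientGroup.mk' (N1 ⊓ N2))
    (QuotientGroup.mk'_surjective (N1 ⊓ N2))
  rwa [QuotientGroup.map_mk'_self,
    Subgroup.map_top_of_surjective _ (QuotientGroup.mk'_surjective (N1 ⊓ N2))] at c4

lemma residual_normal (C : GroupClass.{u}) (G : Type u) [Group G] :
    (groupResidual C G).Normal := by
  constructor
  intro a ha g
  rw [groupResidual, Subgroup.mem_sInf] at ha ⊢
  intro N hN
  have hN' := hN
  obtain ⟨hnorm, -⟩ := hN
  exact hnorm.conj_mem a (ha N hN') g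

lemma residual_mem {p : ℕ} (hp : p.Prime) (G : Type u) [Group G] [Finite G] :
    QuotientInClass (pSupersolvableClass p) (groupResidual (pSupersolvableClass p) G) := by
  set S : Set (Subgroup G) := {N | QuotientInClass (pSupersolvableClass p) N} with hS
  have hne : S.Nonempty := ⟨⊤, quotientInClass_top hp⟩
  obtain ⟨N0, hN0, hmin⟩ := exists_minimal_wrt' (Set.toFinite S) hne
  have hle : ∀ N ∈ S, N0 ≤ N := by
    intro N hN
    have hmem : N0 ⊓ N ∈ S := quotientInClass_inf hp hN0 hN
    have := hmin _ hmem (inf_le_left : N0 ⊓ N ≤ N0)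
    rw [show id N0 = N0 from rfl] at this
    calc N0 = N0 ⊓ N := this
    _ ≤ N := inf_le_right
  have heq : groupResidual (pSupersolvableClass p) G = N0 :=
    le_antisymm (sInf_le hN0) (le_sInf hle)
  rw [heq]
  exact hN0

/-- The key containment: if `X ⧸ R'` is `p`-supersolvable with `R'` normal, then for every
subgroup `T` of `X`, the residual of `T` is contained in `R'`. -/
lemma residualIn_le {p : ℕ} (hp : p.Prime) {X : Type u} [Group X] [Finite X] {R' : Subgroup X}
    (hR' : R'.Normal) (hq : letI := hR'; IsPSupersolvableGrp p (X ⧸ R')) (T : Subgroup X) :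
    residualIn (pSupersolvableClass p) T ≤ R' := by
  letI := hR'
  rw [isPSupersolvable_iff_chain hp] at hq
  have c1 : genChain (cond p) R' ⊤ := by
    have := hq.comap (QuotientGroup.mk' R') (QuotientGroup.mk'_surjective R')
    rwa [MonoidHom.comap_bot, QuotientGroup.ker_mk', Subgroup.comap_top] at this
  have c2 : genChain (cond p) (R'.subgroupOf T) ⊤ := by
    have := c1.subgroupOf (fun {d m} => cond_of_dvd hp) T
    rwa [show (⊤ : Subgroup X).subgroupOf T = ⊤ from by
      rw [Subgroup.top_subgroupOf]] at this
  haveI : (R'.subgroupOf T).Normal := hR'.subgroupOf T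
  have c3 : genChain (cond p) (⊥ : Subgroup (↥T ⧸ R'.subgroupOf T)) ⊤ := by
    have := c2.map (fun {d m} => cond_of_dvd hp) (QuotientGroup.mk' (R'.subgroupOf T))
      (QuotientGroup.mk'_surjective _)
    rwa [QuotientGroup.map_mk'_self,
      Subgroup.map_top_of_surjective _ (QuotientGroup.mk'_surjective _)] at this
  have hclass : QuotientInClass (pSupersolvableClass p) (R'.subgroupOf T) :=
    ⟨inferInstance, isPSupersolvable_of_chain hp c3⟩
  have hres : groupResidual (pSupersolvableClass p) ↥T ≤ R'.subgroupOf T :=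
    sInf_le hclass
  calc residualIn (pSupersolvableClass p) T
      ≤ (R'.subgroupOf T).map T.subtype := Subgroup.map_mono hres
    _ = R' ⊓ T := Subgroup.subgroupOf_map_subtype R' T
    _ ≤ R' := inf_le_left

end AuxPS


/-- For every finite group `G` and prime `p`, the hypercenter of the
`𝒰_p`-residual of `G` is contained in the terminal term `N^∞_{𝒰_p}(G)` of the upper
`𝒰_p`-norm series of `G`. -/
theorem hyperCenter_residual_le_terminal_upperNormSeries
    {G : Type u} [Group G] [Finite G] {p : ℕ} (hp : p.Prime)
    (s : ℕ → Subgroup G) (hs : IsUpperNormSeries (pSupersolvableClass p) G s)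
    (n : ℕ) (hstab : ∀ m : ℕ, n ≤ m → s m = s n) :
    Subgroup.map (groupResidual (pSupersolvableClass p) G).subtype
      (hyperCenter ↥(groupResidual (pSupersolvableClass p) G)) ≤ s n := by
  classical
  obtain ⟨hs0, hstep⟩ := hs
  set R := groupResidual (pSupersolvableClass p) G with hR
  haveI hRn : R.Normal := AuxPS.residual_normal _ _
  obtain ⟨hRn', hGR⟩ := AuxPS.residual_mem hp G
  have main : ∀ k : ℕ, Subgroup.map R.subtype (Subgroup.upperCentralSeries ↥R k) ≤ s k := by
    intro k
    induction k with
    | zero => rw [Subgroup.upperCentralSeries_zero, Subgroup.map_bot, hs0]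
    | succ k ih =>
      obtain ⟨hnorm, heq⟩ := hstep k
      letI := hnorm
      rw [heq]
      rintro x ⟨y, hy, rfl⟩
      rw [Subgroup.mem_comap]
      set φ := QuotientGroup.mk' (s k) with hφ
      set R' : Subgroup (G ⧸ s k) := R.map φ with hR'
      haveI hR'n : R'.Normal := hRn.map φ (QuotientGroup.mk'_surjective (s k))
      have hq : IsPSupersolvableGrp p ((G ⧸ s k) ⧸ R') := by
        rw [AuxPS.isPSupersolvable_iff_chain hp]
        have c0 : AuxPS.genChain (AuxPS.cond p) (⊥ : Subgroup (G ⧸ R)) ⊤ := by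
          rw [← AuxPS.isPSupersolvable_iff_chain hp]
          exact hGR
        have c1 : AuxPS.genChain (AuxPS.cond p) R ⊤ := by
          have := c0.comap (QuotientGroup.mk' R) (QuotientGroup.mk'_surjective R)
          rwa [MonoidHom.comap_bot, QuotientGroup.ker_mk', Subgroup.comap_top] at this
        have c2 : AuxPS.genChain (AuxPS.cond p) R' ⊤ := by
          have := c1.map (fun {d m} => AuxPS.cond_of_dvd hp) φ
            (QuotientGroup.mk'_surjective (s k))
          rwa [Subgroup.map_top_of_surjective _ (QuotientGroup.mk'_surjective (s k))] at this
        have c3 := c2.map (fun {d m} => AuxPS.cond_of_dvd hp) (QuotientGroup.mk' R')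
          (QuotientGroup.mk'_surjective R')
        rwa [QuotientGroup.map_mk'_self,
          Subgroup.map_top_of_surjective _ (QuotientGroup.mk'_surjective R')] at c3
      have hcent : ∀ z ∈ R', φ (R.subtype y) * z * (φ (R.subtype y))⁻¹ = z := by
        rintro z ⟨r, hr, rfl⟩
        have hyc : y * ⟨r, hr⟩ * y⁻¹ * (⟨r, hr⟩ : ↥R)⁻¹ ∈ Subgroup.upperCentralSeries ↥R k :=
          Subgroup.mem_upperCentralSeries_succ_iff.mp hy ⟨r, hr⟩
        have hmem : R.subtype (y * ⟨r, hr⟩ * y⁻¹ * (⟨r, hr⟩ : ↥R)⁻¹) ∈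
            Subgroup.map R.subtype (Subgroup.upperCentralSeries ↥R k) := ⟨_, hyc, rfl⟩
        have hcomm : R.subtype y * r * (R.subtype y)⁻¹ * r⁻¹ ∈ s k := by
          have h5 := ih hmem
          simpa using h5
        have h1 : φ (R.subtype y * r * (R.subtype y)⁻¹ * r⁻¹) = 1 :=
          (QuotientGroup.eq_one_iff _).mpr hcomm
        simp only [map_mul, map_inv] at h1
        exact mul_inv_eq_one.mp h1
      show φ (R.subtype y) ∈ grpNorm (pSupersolvableClass p) (G ⧸ s k)
      rw [grpNorm, weakNorm]
      refine Subgroup.mem_iInf.mpr fun T => Subgroup.mem_iInf.mpr fun _ => ?_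
      have hsub : residualIn (pSupersolvableClass p) T ≤ R' :=
        AuxPS.residualIn_le hp hR'n hq T
      rw [Subgroup.mem_normalizer_iff]
      intro h
      constructor
      · intro hh
        rw [hcent h (hsub hh)]
        exact hh
      · intro hh'
        have h2 := hcent _ (hsub hh')
        have h3 : (MulAut.conj (φ (R.subtype y))) ((MulAut.conj (φ (R.subtype y))) h) =
            (MulAut.conj (φ (R.subtype y))) h := by
          simpa [MulAut.conj_apply, mul_assoc] using h2
        have h4 : (MulAut.conj (φ (R.subtype y))) h = h :=
          (MulAut.conj (φ (R.subtype y))).injective h3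
        rw [MulAut.conj_apply] at h4
        rw [h4] at hh'
        exact hh'
  have step : ∀ i, s i ≤ s (i + 1) := by
    intro i
    obtain ⟨hni, heqi⟩ := hstep i
    letI := hni
    rw [heqi]
    intro g hg
    rw [Subgroup.mem_comap]
    have h1 : QuotientGroup.mk' (s i) g = 1 := (QuotientGroup.eq_one_iff g).mpr hg
    rw [h1]
    exact Subgroup.one_mem _
  have hsmono : ∀ k, s k ≤ s n := by
    intro k
    rcases le_or_gt k n with h | h
    · exact monotone_nat_of_le_succ step h
    · rw [hstab k h.le]
  rw [hyperCenter, Subgroup.map_iSup]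
  exact iSup_le fun k => (main k).trans (hsmono k)
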